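/- For integers i ≥ 0 and 0 ≤ s ≤ 2^i − 1, define a(i,s) = ln 2 / ((2^i + s + 1) · ln(1 + 1/(2^{i+1} + 2s + 1))). Then a(i,s) < 2 ln 2 for all such i, s, and a(i,0) → 2 ln 2 as i → ∞. -/

import Mathlib

open Filter

/-- a(i,s) = ln 2 / ((2^i + s + 1) · ln(1 + 1/(2^{i+1} + 2s + 1))) -/
noncomputable def a (i s : ℕ) : ℝ :=
  Real.log 2 /
    (((2 : ℝ) ^ i + s + 1) * Real.log (1 + 1 / ((2 : ℝ) ^ (i + 1) + 2 * s + 1)))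

theorem apx_lt_two_log_two_and_tendsto :
    (∀ i s : ℕ, s ≤ 2 ^ i - 1 → a i s < 2 * Real.log 2) ∧
      Tendsto (fun i : ℕ => a i 0) atTop (nhds (2 * Real.log 2)) := by
  have hlog2 : 0 < Real.log 2 := Real.log_pos (by norm_num)
  have key : ∀ i s : ℕ,
      1/2 < ((2:ℝ)^i + s + 1) * Real.log (1 + 1/((2:ℝ)^(i+1) + 2*s + 1)) := by
    intro i s
    set k : ℝ := (2:ℝ)^(i+1) + 2*s + 1 with hk
    have hkpos : 0 < k := by positivity
    have hm : (2:ℝ)^i + s + 1 = (k+1)/2 := by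
      rw [hk, pow_succ]; ring
    have h1 : Real.log (k/(k+1)) < k/(k+1) - 1 := by
      apply Real.log_lt_sub_one_of_pos (by positivity)
      intro h
      have : k = k + 1 := by
        field_simp at h
        linarith
      linarith
    have h2 : Real.log (k/(k+1)) = - Real.log (1 + 1/k) := by
      rw [show (1:ℝ) + 1/k = (k+1)/k by field_simp,
        Real.log_div (by positivity) (by positivity),
        Real.log_div (by positivity) (by positivity)]
      ring
    have h3 : 1/(k+1) < Real.log (1 + 1/k) := by
      have he : k/(k+1) - 1 = -(1/(k+1)) := by field_simp; ring
      rw [h2, he] at h1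
      linarith
    rw [hm]
    calc (1:ℝ)/2 = (k+1)/2 * (1/(k+1)) := by field_simp
    _ < (k+1)/2 * Real.log (1 + 1/k) := by
        exact mul_lt_mul_of_pos_left h3 (by positivity)
  constructor
  · intro i s _
    have hD := key i s
    have h := div_lt_div_of_pos_left hlog2 (by norm_num : (0:ℝ) < 1/2) hD
    calc a i s < Real.log 2 / (1/2) := h
    _ = 2 * Real.log 2 := by ring
  · have hx : Tendsto (fun i : ℕ => (2:ℝ)^(i+1) + 1) atTop atTop := by
      apply tendsto_atTop_add_const_right
      exact (tendsto_pow_atTop_atTop_of_one_lt (by norm_num : (1:ℝ) < 2)).comp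
        (tendsto_add_atTop_nat 1)
    have h1 : Tendsto (fun x : ℝ => x * Real.log (1 + 1/x)) atTop (nhds 1) := by
      simpa using Real.tendsto_mul_log_one_add_div_atTop 1
    have h2 : Tendsto (fun x : ℝ => Real.log (1 + 1/x)) atTop (nhds 0) := by
      have hb : Tendsto (fun x : ℝ => (1:ℝ) + 1/x) atTop (nhds 1) := by
        simpa using (tendsto_const_nhds : Tendsto (fun _ : ℝ => (1:ℝ)) atTop (nhds 1)).add tendsto_inv_atTop_zero
      have hc : ContinuousAt Real.log 1 := Real.continuousAt_log one_ne_zero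
      simpa [Function.comp_def] using hc.tendsto.comp hb
    have hf : Tendsto (fun x : ℝ => ((x+1)/2) * Real.log (1 + 1/x)) atTop (nhds (1/2)) := by
      have h3 := (h1.add h2).div_const 2
      rw [show ((1:ℝ)+0)/2 = 1/2 by norm_num] at h3
      apply h3.congr
      intro x
      ring
    have hden : Tendsto (fun i : ℕ =>
        (((2:ℝ)^(i+1) + 1 + 1)/2) * Real.log (1 + 1/((2:ℝ)^(i+1) + 1)))
        atTop (nhds (1/2)) := hf.comp hx
    have hdiv : Tendsto (fun i : ℕ =>
        Real.log 2 / ((((2:ℝ)^(i+1) + 1 + 1)/2) * Real.log (1 + 1/((2:ℝ)^(i+1) + 1))))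
        atTop (nhds (Real.log 2 / (1/2))) :=
      tendsto_const_nhds.div hden (by norm_num)
    have heq : (Real.log 2 / (1/2 : ℝ)) = 2 * Real.log 2 := by ring
    rw [heq] at hdiv
    apply hdiv.congr
    intro i
    unfold a
    push_cast
    rw [pow_succ]
    ring_nf
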